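/- For f, g ∈ ℓᵖ(I) with f ≺ g and g ≺ f, one has ∑_{i∈I} φ(f(i)) = ∑_{i∈I} φ(g(i)) for every convex function φ : (a,b) → [0,∞) whose domain contains the ranges of f and g. -/

import Mathlib

open scoped ENNReal

/-- The standard basis element `e i` of `ℓᵖ(I)`. -/
noncomputable def stdb (p : ℝ≥0∞) {I : Type*} (i : I) : lp (fun _ : I => ℝ) p :=
  letI := Classical.decEq I
  lp.single p i 1

/-- A bounded linear operator `A : ℓᵖ(J) → ℓᵖ(I)` is positive if `A f ≥ 0` whenever `f ≥ 0`. -/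
def IsPositiveOp {I J : Type*} {p : ℝ≥0∞} [Fact (1 ≤ p)]
    (A : lp (fun _ : J => ℝ) p →L[ℝ] lp (fun _ : I => ℝ) p) : Prop :=
  ∀ f : lp (fun _ : J => ℝ) p, (∀ j, 0 ≤ f j) → ∀ i, 0 ≤ A f i

/-- Row stochastic: positive and each row sum `∑_j ⟨A e_j, e_i⟩` equals 1. -/
def IsRowStochastic {I J : Type*} {p : ℝ≥0∞} [Fact (1 ≤ p)]
    (A : lp (fun _ : J => ℝ) p →L[ℝ] lp (fun _ : I => ℝ) p) : Prop :=
  IsPositiveOp A ∧ ∀ i : I, HasSum (fun j : J => A (stdb p j) i) 1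

/-- Column stochastic: positive and each column sum `∑_i ⟨A e_j, e_i⟩` equals 1. -/
def IsColumnStochastic {I J : Type*} {p : ℝ≥0∞} [Fact (1 ≤ p)]
    (A : lp (fun _ : J => ℝ) p →L[ℝ] lp (fun _ : I => ℝ) p) : Prop :=
  IsPositiveOp A ∧ ∀ j : J, HasSum (fun i : I => A (stdb p j) i) 1

/-- Doubly stochastic: both row and column stochastic. -/
def IsDoublyStochastic {I J : Type*} {p : ℝ≥0∞} [Fact (1 ≤ p)]
    (A : lp (fun _ : J => ℝ) p →L[ℝ] lp (fun _ : I => ℝ) p) : Prop :=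
  IsRowStochastic A ∧ IsColumnStochastic A

/-- `f ≺ g` : `f` is majorized by `g`, i.e. `f = D g` for some doubly stochastic `D`. -/
def Majorized {I : Type*} {p : ℝ≥0∞} [Fact (1 ≤ p)]
    (f g : lp (fun _ : I => ℝ) p) : Prop :=
  ∃ D : lp (fun _ : I => ℝ) p →L[ℝ] lp (fun _ : I => ℝ) p,
    IsDoublyStochastic D ∧ f = D g

/-- `T` preserves majorization if `f ≺ g` implies `T f ≺ T g`. -/
def PreservesMajorization {I : Type*} {p : ℝ≥0∞} [Fact (1 ≤ p)]
    (T : lp (fun _ : I => ℝ) p →L[ℝ] lp (fun _ : I => ℝ) p) : Prop :=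
  ∀ f g : lp (fun _ : I => ℝ) p, Majorized f g → Majorized (T f) (T g)

section Aux

variable {I J : Type*} {p : ℝ≥0∞} [Fact (1 ≤ p)]

omit [Fact (1 ≤ p)] in
lemma stdb_eq [DecidableEq I] (j : I) :
    (stdb p j : lp (fun _ : I => ℝ) p) = lp.single p j 1 := by
  unfold stdb
  congr 1
  exact Subsingleton.elim _ _

omit [Fact (1 ≤ p)] in
lemma stdb_apply [DecidableEq I] (j k : I) :
    (stdb p j : lp (fun _ : I => ℝ) p) k = if k = j then (1:ℝ) else 0 := by
  rw [stdb_eq, lp.single_apply]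
  split_ifs with h
  · subst h; exact Pi.single_eq_same _ _
  · exact Pi.single_eq_of_ne h _

omit [Fact (1 ≤ p)] in
lemma stdb_nonneg (j i : I) : 0 ≤ stdb p j i := by
  classical
  rw [stdb_apply]
  split_ifs <;> norm_num

/-- coordinate evaluation as a continuous linear map -/
noncomputable def evalCLM (p : ℝ≥0∞) [Fact (1 ≤ p)] (i : I) :
    lp (fun _ : I => ℝ) p →L[ℝ] ℝ :=
  LinearMap.mkContinuous
    { toFun := fun f => f i
      map_add' := fun f g => by simp [lp.coeFn_add]
      map_smul' := fun c f => by simp [lp.coeFn_smul] }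
    1 (fun f => by
        have hp0 : p ≠ 0 := (zero_lt_one.trans_le (Fact.out : 1 ≤ p)).ne'
        show ‖(f : I → ℝ) i‖ ≤ 1 * ‖f‖
        simpa using lp.norm_apply_le_norm hp0 f i)

@[simp] lemma evalCLM_apply (i : I) (f : lp (fun _ : I => ℝ) p) : evalCLM p i f = f i := rfl

lemma hasSum_D_apply (hp : p ≠ ∞)
    (D : lp (fun _ : J => ℝ) p →L[ℝ] lp (fun _ : I => ℝ) p)
    (h : lp (fun _ : J => ℝ) p) (i : I) :
    HasSum (fun j => h j * D (stdb p j) i) (D h i) := by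
  classical
  have H := (lp.hasSum_single hp h).mapL ((evalCLM p i).comp D)
  have key : ∀ j, ((evalCLM p i).comp D) (lp.single p j (h j)) = h j * D (stdb p j) i := by
    intro j
    have e1 : lp.single p j (h j) = h j • stdb p j := by
      rw [stdb_eq, ← lp.single_smul, smul_eq_mul, mul_one]
    rw [ContinuousLinearMap.comp_apply, e1, map_smul]
    simp [lp.coeFn_smul]
  show HasSum _ (((evalCLM p i).comp D) h)
  simpa only [key] using H

end Aux

lemma support_line {a b : EReal} (φ : ℝ → ℝ)
    (hconv : ConvexOn ℝ {x : ℝ | a < (x : EReal) ∧ (x : EReal) < b} φ)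
    {t : ℝ} (ht : a < (t : EReal) ∧ (t : EReal) < b) :
    ∃ c : ℝ, ∀ x : ℝ, a < (x : EReal) → (x : EReal) < b →
      φ t + c * (x - t) ≤ φ x := by
  set S : Set ℝ := {x : ℝ | a < (x : EReal) ∧ (x : EReal) < b} with hS
  obtain ⟨u, hu1, hu2⟩ := EReal.lt_iff_exists_real_btwn.1 ht.2
  obtain ⟨l, hl1, hl2⟩ := EReal.lt_iff_exists_real_btwn.1 ht.1
  have htu : t < u := by exact_mod_cast hu1
  have hlt : l < t := by exact_mod_cast hl2
  have huS : u ∈ S := ⟨ht.1.trans hu1, hu2⟩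
  have hlS : l ∈ S := ⟨hl1, hl2.trans ht.2⟩
  set T : Set ℝ := {x : ℝ | x ∈ S ∧ t < x} with hT
  set G : Set ℝ := (fun x => (φ x - φ t) / (x - t)) '' T with hG
  have hne : G.Nonempty := ⟨_, ⟨u, ⟨huS, htu⟩, rfl⟩⟩
  have key : ∀ y ∈ S, y < t → ∀ z ∈ T, (φ y - φ t) / (y - t) ≤ (φ z - φ t) / (z - t) := by
    intro y hy hyt z hz
    have h1 := hconv.slope_mono_adjacent hy hz.1 hyt hz.2
    have e : (φ y - φ t) / (y - t) = (φ t - φ y) / (t - y) := by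
      rw [← neg_div_neg_eq]; ring_nf
    rw [e]; exact h1
  have hbdd : BddBelow G := by
    refine ⟨(φ l - φ t) / (l - t), ?_⟩
    rintro _ ⟨z, hz, rfl⟩
    exact key l hlS hlt z hz
  refine ⟨sInf G, fun x hx1 hx2 => ?_⟩
  rcases lt_trichotomy x t with hxt | rfl | htx
  · have hlb : (φ x - φ t) / (x - t) ≤ sInf G := by
      refine le_csInf hne ?_
      rintro _ ⟨z, hz, rfl⟩
      exact key x ⟨hx1, hx2⟩ hxt z hz
    have hneg : x - t < 0 := by linarith
    have := (div_le_iff_of_neg hneg).1 hlb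
    linarith
  · simp
  · have hub : sInf G ≤ (φ x - φ t) / (x - t) :=
      csInf_le hbdd ⟨x, ⟨⟨hx1, hx2⟩, htx⟩, rfl⟩
    have hpos : 0 < x - t := by linarith
    have := (le_div_iff₀ hpos).1 hub
    linarith

lemma tsum_le_of_majorized {I : Type*} {p : ℝ≥0∞} [Fact (1 ≤ p)] (hp : p ≠ ∞)
    {f g : lp (fun _ : I => ℝ) p} (hfg : Majorized f g)
    {a b : EReal} (φ : ℝ → ℝ)
    (hconv : ConvexOn ℝ {x : ℝ | a < (x : EReal) ∧ (x : EReal) < b} φ)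
    (hφ : ∀ x : ℝ, a < (x : EReal) → (x : EReal) < b → 0 ≤ φ x)
    (hf : ∀ i, a < (f i : EReal) ∧ (f i : EReal) < b)
    (hg : ∀ i, a < (g i : EReal) ∧ (g i : EReal) < b) :
    ∑' i : I, ENNReal.ofReal (φ (f i)) ≤ ∑' i : I, ENNReal.ofReal (φ (g i)) := by
  obtain ⟨D, ⟨⟨hpos, hrow⟩, ⟨-, hcol⟩⟩, hfD⟩ := hfg
  set d : I → I → ℝ := fun i j => D (stdb p j) i with hd
  have hd0 : ∀ i j, 0 ≤ d i j := fun i j => hpos _ (fun k => stdb_nonneg j k) i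
  have hsum_f : ∀ i, HasSum (fun j => g j * d i j) (f i) := by
    intro i
    have := hasSum_D_apply hp D g i
    rwa [← hfD] at this
  have hφg0 : ∀ j, 0 ≤ φ (g j) := fun j => hφ _ (hg j).1 (hg j).2
  have stepA : ∀ i, ENNReal.ofReal (φ (f i)) ≤ ∑' j, ENNReal.ofReal (d i j * φ (g j)) := by
    intro i
    by_cases htop : ∑' j, ENNReal.ofReal (d i j * φ (g j)) = ⊤
    · rw [htop]; exact le_top
    · obtain ⟨c, hc⟩ := support_line φ hconv (hf i)
      have hF0 : ∀ j, 0 ≤ d i j * φ (g j) := fun j => mul_nonneg (hd0 i j) (hφg0 j)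
      have hFs : Summable (fun j => d i j * φ (g j)) := by
        have h1 := ENNReal.summable_toReal htop
        refine h1.congr fun j => ?_
        exact ENNReal.toReal_ofReal (hF0 j)
      have hGs : HasSum (fun j => φ (f i) * d i j + c * (g j * d i j - f i * d i j)) (φ (f i)) := by
        have h1 : HasSum (fun j => φ (f i) * d i j) (φ (f i) * 1) := (hrow i).mul_left _
        have h2 : HasSum (fun j => g j * d i j - f i * d i j) (f i - f i * 1) :=
          (hsum_f i).sub ((hrow i).mul_left (f i))
        have h3 := h1.add (h2.mul_left c)
        simpa using h3
      have hle : φ (f i) ≤ ∑' j, d i j * φ (g j) := by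
        rw [← hGs.tsum_eq]
        refine Summable.tsum_le_tsum (fun j => ?_) hGs.summable hFs
        have h2 := mul_le_mul_of_nonneg_left (hc (g j) (hg j).1 (hg j).2) (hd0 i j)
        nlinarith [h2]
      calc ENNReal.ofReal (φ (f i)) ≤ ENNReal.ofReal (∑' j, d i j * φ (g j)) :=
            ENNReal.ofReal_le_ofReal hle
        _ = ∑' j, ENNReal.ofReal (d i j * φ (g j)) :=
            ENNReal.ofReal_tsum_of_nonneg hF0 hFs
  calc ∑' i, ENNReal.ofReal (φ (f i))
      ≤ ∑' i, ∑' j, ENNReal.ofReal (d i j * φ (g j)) := ENNReal.tsum_le_tsum stepA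
    _ = ∑' j, ∑' i, ENNReal.ofReal (d i j * φ (g j)) := ENNReal.tsum_comm
    _ = ∑' j, ENNReal.ofReal (φ (g j)) := by
        refine tsum_congr fun j => ?_
        have e1 : ∀ i, ENNReal.ofReal (d i j * φ (g j))
            = ENNReal.ofReal (d i j) * ENNReal.ofReal (φ (g j)) :=
          fun i => ENNReal.ofReal_mul (hd0 i j)
        simp_rw [e1]
        rw [ENNReal.tsum_mul_right]
        have e2 : ∑' i, ENNReal.ofReal (d i j) = 1 := by
          rw [← ENNReal.ofReal_tsum_of_nonneg (fun i => hd0 i j) (hcol j).summable,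
            (hcol j).tsum_eq, ENNReal.ofReal_one]
        rw [e2, one_mul]

/-- If `f ≺ g` and `g ≺ f` then `∑_i φ (f i) = ∑_i φ (g i)` for every convex
`φ : (a,b) → [0,∞)` whose domain contains the ranges of `f` and `g`. -/
theorem stmt10 {I : Type*} [Nonempty I] (p : ℝ≥0∞) [Fact (1 ≤ p)] (hp : p ≠ ∞)
    (f g : lp (fun _ : I => ℝ) p) (hfg : Majorized f g) (hgf : Majorized g f)
    (a b : EReal) (hab : a < b) (φ : ℝ → ℝ)
    (hconv : ConvexOn ℝ {x : ℝ | a < (x : EReal) ∧ (x : EReal) < b} φ)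
    (hφ : ∀ x : ℝ, a < (x : EReal) → (x : EReal) < b → 0 ≤ φ x)
    (hf : ∀ i, a < (f i : EReal) ∧ (f i : EReal) < b)
    (hg : ∀ i, a < (g i : EReal) ∧ (g i : EReal) < b) :
    ∑' i : I, ENNReal.ofReal (φ (f i)) = ∑' i : I, ENNReal.ofReal (φ (g i)) :=
  le_antisymm (tsum_le_of_majorized hp hfg φ hconv hφ hf hg)
    (tsum_le_of_majorized hp hgf φ hconv hφ hg hf)
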